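/- Suppose the past assortments are nested, and let S ⊆ N₀ satisfy S ∩ S_1 ≠ ∅. Then for every tuple (i_1,…,i_M) ∈ L and every m ∈ {1,…,M}: (a) if i_m ∈ S, then ρ_{i_1⋯i_M}(S ∩ S_m) = r(i_m); (b) if i_m ∉ S and m = 1, then ρ_{i_1⋯i_M}(S ∩ S_1) = min_{i ∈ B_1 ∩ S} r(i); (c) if i_m ∉ S and m ≥ 2, then ρ_{i_1⋯i_M}(S ∩ S_m) = min( {ρ_{i_1⋯i_M}(S ∩ S_{m−1})} ∪ {r(i) : i ∈ B_m ∩ S} ). -/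
import Mathlib

namespace RobustAssortment


/-- `i` is the most preferred product of the assortment `S` under the ranking `σ`. -/
def isTop {n : ℕ} (σ : Equiv.Perm (Fin (n + 1))) (S : Finset (Fin (n + 1)))
    (i : Fin (n + 1)) : Prop :=
  i ∈ S ∧ ∀ j ∈ S, σ i ≤ σ j

instance {n : ℕ} (σ : Equiv.Perm (Fin (n + 1))) (S : Finset (Fin (n + 1)))
    (i : Fin (n + 1)) : Decidable (isTop σ S i) := by
  unfold isTop; infer_instance
/-- Membership in the set `L` of tuples of products compatible with a common ranking. -/
def memL {n M : ℕ} (Sm : Fin M → Finset (Fin (n + 1)))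
    (t : Fin M → Fin (n + 1)) : Prop :=
  ∃ σ : Equiv.Perm (Fin (n + 1)), ∀ m : Fin M, isTop σ (Sm m) (t m)

instance {n M : ℕ} (Sm : Fin M → Finset (Fin (n + 1))) (t : Fin M → Fin (n + 1)) :
    Decidable (memL Sm t) := by
  unfold memL; infer_instance
/-- The quantity `ρ_{i_1⋯i_M}(S)`: the minimum revenue among products of `S` that can be
the top of `S` under a ranking corresponding to the tuple `t`. -/
noncomputable def rho {n M : ℕ} (Sm : Fin M → Finset (Fin (n + 1)))
    (r : Fin (n + 1) → ℝ) (t : Fin M → Fin (n + 1)) (S : Finset (Fin (n + 1))) : ℝ :=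
  sInf {x | ∃ i ∈ S, (∃ σ : Equiv.Perm (Fin (n + 1)),
    (∀ m : Fin M, isTop σ (Sm m) (t m)) ∧ isTop σ S i) ∧ x = r i}

/-- From an injective rational key we can build a permutation realizing its order. -/
lemma exists_perm_of_key {n : ℕ} (w : Fin (n+1) → ℚ) (hw : Function.Injective w) :
    ∃ σ : Equiv.Perm (Fin (n+1)), ∀ x y, σ x < σ y ↔ w x < w y := by
  classical
  set c : Fin (n+1) → ℕ := fun x => (Finset.univ.filter fun z => w z < w x).card with hc
  have hmono : ∀ x y, w x < w y → c x < c y := by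
    intro x y h
    apply Finset.card_lt_card
    constructor
    · intro z hz
      simp only [Finset.mem_filter, Finset.mem_univ, true_and] at hz ⊢
      exact lt_trans hz h
    · intro hsub
      have hx : x ∈ Finset.univ.filter fun z => w z < w y := by
        simp [h]
      have := hsub hx
      simp at this
  have hlt : ∀ x, c x < n + 1 := by
    intro x
    have hsub : (Finset.univ.filter fun z => w z < w x) ⊆ Finset.univ.erase x := by
      intro z hz
      simp only [Finset.mem_filter, Finset.mem_univ, true_and] at hz
      exact Finset.mem_erase.2 ⟨by rintro rfl; exact lt_irrefl _ hz, Finset.mem_univ z⟩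
    have h1 : c x ≤ (Finset.univ.erase x).card := Finset.card_le_card hsub
    have h2 : (Finset.univ.erase x).card = n := by
      rw [Finset.card_erase_of_mem (Finset.mem_univ x)]
      simp
    omega
  set f : Fin (n+1) → Fin (n+1) := fun x => ⟨c x, hlt x⟩ with hf
  have finj : Function.Injective f := by
    intro x y h
    rcases lt_trichotomy (w x) (w y) with h' | h' | h'
    · exact absurd (congrArg Fin.val h) (Nat.ne_of_lt (hmono _ _ h'))
    · exact hw h'
    · exact absurd (congrArg Fin.val h).symm (Nat.ne_of_lt (hmono _ _ h'))
  refine ⟨Equiv.ofBijective f (Finite.injective_iff_bijective.mp finj), ?_⟩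
  intro x y
  constructor
  · intro h
    rcases lt_trichotomy (w x) (w y) with h' | h' | h'
    · exact h'
    · exact absurd (hw h') (by rintro rfl; exact lt_irrefl _ h)
    · exact absurd h (by simp only [Equiv.ofBijective_apply]; exact not_lt.2 (le_of_lt
        (by exact_mod_cast (Fin.mk_lt_mk.2 (hmono _ _ h') : f y < f x))))
  · intro h
    exact (Fin.mk_lt_mk.2 (hmono _ _ h) : f x < f y)



/-- Modify a permutation by moving the elements of `D` (in their relative order) to the
positions immediately after rank `k`, keeping everything else in its relative order. -/
lemma exists_perm_move {n : ℕ} (σ : Equiv.Perm (Fin (n+1))) (D : Finset (Fin (n+1))) (k : ℕ) :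
    ∃ σ' : Equiv.Perm (Fin (n+1)),
      (∀ x ∉ D, ∀ y ∉ D, (σ' x < σ' y ↔ σ x < σ y)) ∧
      (∀ x ∉ D, ∀ y ∈ D, (σ' x < σ' y ↔ (σ x : ℕ) ≤ k)) ∧
      (∀ x ∈ D, ∀ y ∉ D, (σ' x < σ' y ↔ k < (σ y : ℕ))) ∧
      (∀ x ∈ D, ∀ y ∈ D, (σ' x < σ' y ↔ σ x < σ y)) := by
  classical
  have hN : (0:ℚ) < (n:ℚ) + 2 := by positivity
  set q : Fin (n+1) → ℚ := fun x => (((σ x : ℕ) : ℚ) + 1) / ((n:ℚ) + 2) with hqdef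
  have hq0 : ∀ x, 0 < q x := by
    intro x; apply div_pos _ hN; positivity
  have hq1 : ∀ x, q x < 1 := by
    intro x
    rw [div_lt_one hN]
    have := (σ x).isLt
    have : ((σ x : ℕ) : ℚ) < (n:ℚ) + 1 := by exact_mod_cast this
    linarith
  have hqlt : ∀ x y, q x < q y ↔ (σ x : ℕ) < (σ y : ℕ) := by
    intro x y
    rw [div_lt_div_iff_of_pos_right hN]
    constructor
    · intro h; exact_mod_cast (by linarith : ((σ x : ℕ) : ℚ) < ((σ y : ℕ) : ℚ))
    · intro h; have : ((σ x : ℕ) : ℚ) < ((σ y : ℕ) : ℚ) := by exact_mod_cast h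
      linarith
  set w : Fin (n+1) → ℚ := fun x => if x ∈ D then (k:ℚ) + q x else ((σ x : ℕ) : ℚ) with hwdef
  have hwD : ∀ x ∈ D, (k:ℚ) < w x ∧ w x < (k:ℚ) + 1 := by
    intro x hx
    simp only [hwdef, if_pos hx]
    exact ⟨by linarith [hq0 x], by linarith [hq1 x]⟩
  have hw : Function.Injective w := by
    intro x y hxy
    by_cases hx : x ∈ D <;> by_cases hy : y ∈ D
    · simp only [hwdef, if_pos hx, if_pos hy] at hxy
      have hq : q x = q y := by linarith
      have hxy' : ¬ ((σ x : ℕ) < (σ y : ℕ)) := by rw [← hqlt]; exact not_lt.2 hq.ge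
      have hyx' : ¬ ((σ y : ℕ) < (σ x : ℕ)) := by rw [← hqlt]; exact not_lt.2 hq.le
      have : (σ x : ℕ) = (σ y : ℕ) := by omega
      exact σ.injective (Fin.ext this)
    · exfalso
      have h1 := hwD x hx
      rw [hxy] at h1
      simp only [hwdef, if_neg hy] at h1
      have hk1 : k < (σ y : ℕ) := by exact_mod_cast h1.1
      have hk2 : (σ y : ℕ) < k + 1 := by exact_mod_cast (by push_cast; linarith [h1.2] : ((σ y : ℕ):ℚ) < (k:ℚ)+1)
      omega
    · exfalso
      have h1 := hwD y hy
      rw [← hxy] at h1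
      simp only [hwdef, if_neg hx] at h1
      have hk1 : k < (σ x : ℕ) := by exact_mod_cast h1.1
      have hk2 : (σ x : ℕ) < k + 1 := by exact_mod_cast (by push_cast; linarith [h1.2] : ((σ x : ℕ):ℚ) < (k:ℚ)+1)
      omega
    · simp only [hwdef, if_neg hx, if_neg hy] at hxy
      exact σ.injective (Fin.ext (by exact_mod_cast hxy))
  obtain ⟨σ', hσ'⟩ := exists_perm_of_key w hw
  refine ⟨σ', ?_, ?_, ?_, ?_⟩
  · intro x hx y hy
    rw [hσ']
    simp only [hwdef, if_neg hx, if_neg hy]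
    rw [Fin.lt_def]
    exact_mod_cast Iff.rfl
  · intro x hx y hy
    rw [hσ']
    simp only [hwdef, if_neg hx, if_pos hy]
    constructor
    · intro h
      by_contra h'
      have : (k:ℚ) + 1 ≤ ((σ x : ℕ) : ℚ) := by exact_mod_cast (by omega : k + 1 ≤ (σ x : ℕ))
      linarith [hq1 y]
    · intro h
      have : ((σ x : ℕ) : ℚ) ≤ (k:ℚ) := by exact_mod_cast h
      linarith [hq0 y]
  · intro x hx y hy
    rw [hσ']
    simp only [hwdef, if_pos hx, if_neg hy]
    constructor
    · intro h
      exact_mod_cast (by linarith [hq0 x] : (k:ℚ) < ((σ y : ℕ) : ℚ))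
    · intro h
      have : (k:ℚ) + 1 ≤ ((σ y : ℕ) : ℚ) := by exact_mod_cast (by omega : k + 1 ≤ (σ y : ℕ))
      linarith [hq1 x]
  · intro x hx y hy
    rw [hσ']
    simp only [hwdef, if_pos hx, if_pos hy]
    rw [Fin.lt_def, ← hqlt]
    constructor <;> intro h <;> linarith




/-- Construction I: if `i ∈ S ∩ S_m` belongs to no earlier assortment and `t m ∉ S`,
promote `i` to the position just after `t m` to make it the top of `S ∩ S_m`. -/
lemma constructionI {n M : ℕ} (Sm : Fin M → Finset (Fin (n+1))) (t : Fin M → Fin (n+1))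
    (σ : Equiv.Perm (Fin (n+1))) (hσ : ∀ m', isTop σ (Sm m') (t m'))
    (S : Finset (Fin (n+1))) (m : Fin M) (i : Fin (n+1))
    (hiS : i ∈ S) (him : i ∈ Sm m) (hlow : ∀ m' : Fin M, i ∈ Sm m' → Sm m ⊆ Sm m')
    (htm : t m ∉ S) :
    ∃ σ' : Equiv.Perm (Fin (n+1)),
      (∀ m', isTop σ' (Sm m') (t m')) ∧ isTop σ' (S ∩ Sm m) i := by
  classical
  obtain ⟨σ', h1, h2, h3, h4⟩ := exists_perm_move σ ({i} : Finset (Fin (n+1))) ((σ (t m) : ℕ))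
  have hti : ∀ m', t m' ≠ i := by
    intro m' he
    have hmem : i ∈ Sm m' := he ▸ (hσ m').1
    have hsub : Sm m ⊆ Sm m' := hlow m' hmem
    have ha : σ (t m) ≤ σ i := (hσ m).2 i him
    have hb : σ (t m') ≤ σ (t m) := (hσ m').2 (t m) (hsub (hσ m).1)
    have : σ (t m) = σ i := le_antisymm ha (he ▸ hb)
    have : t m = i := σ.injective this
    exact htm (this ▸ hiS)
  refine ⟨σ', ?_, ?_⟩
  · intro m'
    refine ⟨(hσ m').1, ?_⟩
    intro j hj
    rcases eq_or_ne j (t m') with rfl | hne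
    · exact le_refl _
    have htD : t m' ∉ ({i} : Finset (Fin (n+1))) := by simp [hti m']
    rcases eq_or_ne j i with rfl | hji
    · -- j = i ∈ D
      apply le_of_lt
      rw [h2 _ htD _ (Finset.mem_singleton_self _)]
      have hsub : Sm m ⊆ Sm m' := hlow m' hj
      exact Fin.le_def.mp ((hσ m').2 (t m) (hsub (hσ m).1))
    · apply le_of_lt
      rw [h1 _ htD _ (by simp [hji])]
      exact lt_of_le_of_ne ((hσ m').2 j hj) (fun h => hne (σ.injective h).symm)
  · refine ⟨Finset.mem_inter.2 ⟨hiS, him⟩, ?_⟩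
    intro j hj
    rcases eq_or_ne j i with rfl | hji
    · exact le_refl _
    apply le_of_lt
    rw [h3 _ (Finset.mem_singleton_self i) _ (by simp [hji])]
    have hjm : j ∈ Sm m := (Finset.mem_inter.1 hj).2
    have hjS : j ∈ S := (Finset.mem_inter.1 hj).1
    have hne : j ≠ t m := fun h => htm (h ▸ hjS)
    exact Fin.lt_def.mp (lt_of_le_of_ne ((hσ m).2 j hjm) (fun h => hne (σ.injective h).symm))

/-- Construction II: if `i` can top `S ∩ S_{m₁}` (with `m₁` the predecessor of `m`) and
`t m ∉ S`, demote the new products of `B_m ∩ S` below `i` to make `i` top `S ∩ S_m`. -/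
lemma constructionII {n M : ℕ} (Sm : Fin M → Finset (Fin (n+1))) (t : Fin M → Fin (n+1))
    (hmono : ∀ a b : Fin M, a ≤ b → Sm a ⊆ Sm b)
    (S : Finset (Fin (n+1))) (m₁ m : Fin M) (hm₁ : m₁ < m)
    (hcov : ∀ m' : Fin M, m' < m → Sm m' ⊆ Sm m₁)
    (σ : Equiv.Perm (Fin (n+1))) (hσ : ∀ m', isTop σ (Sm m') (t m'))
    (i : Fin (n+1)) (htop : isTop σ (S ∩ Sm m₁) i) (htm : t m ∉ S) :
    ∃ σ' : Equiv.Perm (Fin (n+1)),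
      (∀ m', isTop σ' (Sm m') (t m')) ∧ isTop σ' (S ∩ Sm m) i := by
  classical
  obtain ⟨himem, hib⟩ := htop
  have hiS : i ∈ S := (Finset.mem_inter.1 himem).1
  have him₁ : i ∈ Sm m₁ := (Finset.mem_inter.1 himem).2
  set D : Finset (Fin (n+1)) := (Sm m \ Sm m₁) ∩ S with hD
  obtain ⟨σ', h1, h2, h3, h4⟩ := exists_perm_move σ D ((σ i : ℕ))
  have hiD : i ∉ D := by
    simp only [hD, Finset.mem_inter, Finset.mem_sdiff]
    tauto
  have hmge : ∀ m' : Fin M, ∀ j ∈ D, j ∈ Sm m' → m ≤ m' := by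
    intro m' j hjD hjm'
    by_contra h
    have : j ∈ Sm m₁ := hcov m' (lt_of_not_ge h) hjm'
    simp only [hD, Finset.mem_inter, Finset.mem_sdiff] at hjD
    tauto
  have htD : ∀ m', t m' ∉ D := by
    intro m' hm'
    have hm'' : m ≤ m' := hmge m' (t m') hm' (hσ m').1
    have hsub : Sm m ⊆ Sm m' := hmono _ _ hm''
    have ha : σ (t m') ≤ σ (t m) := (hσ m').2 (t m) (hsub (hσ m).1)
    have hb : σ (t m) ≤ σ (t m') := by
      apply (hσ m).2
      simp only [hD, Finset.mem_inter, Finset.mem_sdiff] at hm'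
      exact hm'.1.1
    have : t m = t m' := σ.injective (le_antisymm hb ha)
    have htS : t m' ∈ S := by
      simp only [hD, Finset.mem_inter] at hm'
      exact hm'.2
    exact htm (this ▸ htS)
  refine ⟨σ', ?_, ?_⟩
  · intro m'
    refine ⟨(hσ m').1, ?_⟩
    intro j hj
    rcases eq_or_ne j (t m') with rfl | hne
    · exact le_refl _
    by_cases hjD : j ∈ D
    · apply le_of_lt
      rw [h2 _ (htD m') _ hjD]
      have hm'' : m ≤ m' := hmge m' j hjD hj
      have : i ∈ Sm m' := hmono _ _ (le_of_lt (lt_of_lt_of_le hm₁ hm'')) him₁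
      exact Fin.le_def.mp ((hσ m').2 i this)
    · apply le_of_lt
      rw [h1 _ (htD m') _ hjD]
      exact lt_of_le_of_ne ((hσ m').2 j hj) (fun h => hne (σ.injective h).symm)
  · refine ⟨Finset.mem_inter.2 ⟨hiS, hmono _ _ (le_of_lt hm₁) him₁⟩, ?_⟩
    intro j hj
    rcases eq_or_ne j i with rfl | hji
    · exact le_refl _
    have hjS : j ∈ S := (Finset.mem_inter.1 hj).1
    have hjm : j ∈ Sm m := (Finset.mem_inter.1 hj).2
    by_cases hjD : j ∈ D
    · apply le_of_lt
      rw [h2 _ hiD _ hjD]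
    · apply le_of_lt
      rw [h1 _ hiD _ hjD]
      have hjm₁ : j ∈ Sm m₁ := by
        simp only [hD, Finset.mem_inter, Finset.mem_sdiff] at hjD
        tauto
      exact lt_of_le_of_ne (hib j (Finset.mem_inter.2 ⟨hjS, hjm₁⟩))
        (fun h => hji (σ.injective h).symm)


/-- Lemma 11 of the paper: recursive formula for `ρ_{i_1⋯i_M}(S ∩ S_m)` when the past
assortments are nested. (Index `m : Fin M` corresponds to the paper's assortment `S_{m+1}`;
in particular `(m : ℕ) = 0` is the paper's case `m = 1` with `B_1 = S_1`, and `1 ≤ (m : ℕ)`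
is the paper's case `m ≥ 2` with `B_m = S_m \ S_{m-1}`.) -/
theorem statement11 (n M : ℕ) (hn : 1 ≤ n) (hM : 1 ≤ M)
    (r : Fin (n + 1) → ℝ) (hr0 : r 0 = 0) (hr : StrictMono r)
    (Sm : Fin M → Finset (Fin (n + 1))) (hSm0 : ∀ m, (0 : Fin (n + 1)) ∈ Sm m)
    (hnested : ∀ m m' : Fin M, m < m' → Sm m ⊂ Sm m')
    (S : Finset (Fin (n + 1))) (hS : (S ∩ Sm ⟨0, hM⟩).Nonempty) :
    ∀ t : Fin M → Fin (n + 1), memL Sm t → ∀ m : Fin M,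
      (t m ∈ S → rho Sm r t (S ∩ Sm m) = r (t m)) ∧
      (t m ∉ S → (m : ℕ) = 0 →
        rho Sm r t (S ∩ Sm m) = sInf (r '' (↑(Sm m ∩ S) : Set (Fin (n + 1))))) ∧
      (t m ∉ S → 1 ≤ (m : ℕ) →
        rho Sm r t (S ∩ Sm m) =
          sInf (insert
            (rho Sm r t (S ∩ Sm ⟨(m : ℕ) - 1, lt_of_le_of_lt (Nat.sub_le _ _) m.isLt⟩))
            (r '' (↑((Sm m \ Sm ⟨(m : ℕ) - 1, lt_of_le_of_lt (Nat.sub_le _ _) m.isLt⟩) ∩ S) :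
              Set (Fin (n + 1)))))) := by
  classical
  intro t ht m
  have hmono : ∀ a b : Fin M, a ≤ b → Sm a ⊆ Sm b := by
    intro a b hab
    rcases eq_or_lt_of_le hab with h | h
    · rw [h]
    · exact (hnested a b h).subset
  obtain ⟨σ₀, hσ₀⟩ := ht
  refine ⟨?_, ?_, ?_⟩
  · -- case (a): t m ∈ S
    intro htmS
    have hTeq : {x | ∃ i ∈ S ∩ Sm m, (∃ σ : Equiv.Perm (Fin (n + 1)),
        (∀ m' : Fin M, isTop σ (Sm m') (t m')) ∧ isTop σ (S ∩ Sm m) i) ∧ x = r i}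
        = {r (t m)} := by
      ext x
      simp only [Set.mem_setOf_eq, Set.mem_singleton_iff]
      constructor
      · rintro ⟨i, hi, ⟨σ, hc, hti⟩, rfl⟩
        have h1 : σ i ≤ σ (t m) := hti.2 _ (Finset.mem_inter.2 ⟨htmS, (hc m).1⟩)
        have h2 : σ (t m) ≤ σ i := (hc m).2 i (Finset.mem_inter.1 hi).2
        rw [σ.injective (le_antisymm h1 h2)]
      · rintro rfl
        exact ⟨t m, Finset.mem_inter.2 ⟨htmS, (hσ₀ m).1⟩,
          ⟨σ₀, hσ₀, ⟨Finset.mem_inter.2 ⟨htmS, (hσ₀ m).1⟩,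
            fun j hj => (hσ₀ m).2 j (Finset.mem_inter.1 hj).2⟩⟩, rfl⟩
    unfold rho
    rw [hTeq]
    exact csInf_singleton _
  · -- case (b): t m ∉ S and m = 0
    intro htmS hm0
    have hTeq : {x | ∃ i ∈ S ∩ Sm m, (∃ σ : Equiv.Perm (Fin (n + 1)),
        (∀ m' : Fin M, isTop σ (Sm m') (t m')) ∧ isTop σ (S ∩ Sm m) i) ∧ x = r i}
        = r '' (↑(Sm m ∩ S) : Set (Fin (n + 1))) := by
      ext x
      simp only [Set.mem_setOf_eq, Set.mem_image, Finset.mem_coe]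
      constructor
      · rintro ⟨i, hi, _, rfl⟩
        exact ⟨i, Finset.mem_inter.2 ⟨(Finset.mem_inter.1 hi).2, (Finset.mem_inter.1 hi).1⟩, rfl⟩
      · rintro ⟨i, hi', rfl⟩
        have him : i ∈ Sm m := (Finset.mem_inter.1 hi').1
        have hiS : i ∈ S := (Finset.mem_inter.1 hi').2
        obtain ⟨σ', hc', ht'⟩ := constructionI Sm t σ₀ hσ₀ S m i hiS him
          (fun m' _ => hmono m m' (by rw [Fin.le_def, hm0]; exact Nat.zero_le _)) htmS
        exact ⟨i, Finset.mem_inter.2 ⟨hiS, him⟩, ⟨σ', hc', ht'⟩, rfl⟩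
    unfold rho
    rw [hTeq]
  · -- case (c): t m ∉ S and 1 ≤ m
    intro htmS hm1
    set m₁ : Fin M := ⟨(m : ℕ) - 1, lt_of_le_of_lt (Nat.sub_le _ _) m.isLt⟩ with hm₁def
    have hm₁val : (m₁ : ℕ) = (m : ℕ) - 1 := rfl
    have hm₁lt : m₁ < m := by
      rw [Fin.lt_def, hm₁val]; omega
    have hcov : ∀ m' : Fin M, m' < m → Sm m' ⊆ Sm m₁ := by
      intro m' h
      apply hmono
      rw [Fin.le_def, hm₁val]
      have := Fin.lt_def.mp h
      omega
    have hXne : {x | ∃ i ∈ S ∩ Sm m₁, (∃ σ : Equiv.Perm (Fin (n + 1)),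
        (∀ m' : Fin M, isTop σ (Sm m') (t m')) ∧ isTop σ (S ∩ Sm m₁) i) ∧ x = r i}.Nonempty := by
      obtain ⟨a, ha⟩ := hS
      have ha' : a ∈ S ∩ Sm m₁ := Finset.mem_inter.2 ⟨(Finset.mem_inter.1 ha).1,
        hmono ⟨0, hM⟩ m₁ (by rw [Fin.le_def]; exact Nat.zero_le _) (Finset.mem_inter.1 ha).2⟩
      obtain ⟨i, hi, hmin⟩ := Finset.exists_min_image (S ∩ Sm m₁) (fun x => σ₀ x) ⟨a, ha'⟩
      exact ⟨r i, i, hi, ⟨σ₀, hσ₀, hi, fun j hj => hmin j hj⟩, rfl⟩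
    have hXfin : {x | ∃ i ∈ S ∩ Sm m₁, (∃ σ : Equiv.Perm (Fin (n + 1)),
        (∀ m' : Fin M, isTop σ (Sm m') (t m')) ∧ isTop σ (S ∩ Sm m₁) i) ∧ x = r i}.Finite := by
      apply Set.Finite.subset (Set.Finite.image r (S ∩ Sm m₁).finite_toSet)
      rintro x ⟨i, hi, _, rfl⟩
      exact ⟨i, hi, rfl⟩
    have hTeq : {x | ∃ i ∈ S ∩ Sm m, (∃ σ : Equiv.Perm (Fin (n + 1)),
        (∀ m' : Fin M, isTop σ (Sm m') (t m')) ∧ isTop σ (S ∩ Sm m) i) ∧ x = r i}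
        = {x | ∃ i ∈ S ∩ Sm m₁, (∃ σ : Equiv.Perm (Fin (n + 1)),
        (∀ m' : Fin M, isTop σ (Sm m') (t m')) ∧ isTop σ (S ∩ Sm m₁) i) ∧ x = r i}
        ∪ r '' (↑((Sm m \ Sm m₁) ∩ S) : Set (Fin (n + 1))) := by
      ext x
      simp only [Set.mem_setOf_eq, Set.mem_union, Set.mem_image, Finset.mem_coe]
      constructor
      · rintro ⟨i, hi, ⟨σ, hc, hti⟩, rfl⟩
        have hiS : i ∈ S := (Finset.mem_inter.1 hi).1
        have him : i ∈ Sm m := (Finset.mem_inter.1 hi).2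
        by_cases him₁ : i ∈ Sm m₁
        · left
          refine ⟨i, Finset.mem_inter.2 ⟨hiS, him₁⟩, ⟨σ, hc,
            Finset.mem_inter.2 ⟨hiS, him₁⟩, ?_⟩, rfl⟩
          intro j hj
          exact hti.2 j (Finset.mem_inter.2 ⟨(Finset.mem_inter.1 hj).1,
            hmono m₁ m hm₁lt.le (Finset.mem_inter.1 hj).2⟩)
        · right
          exact ⟨i, Finset.mem_inter.2 ⟨Finset.mem_sdiff.2 ⟨him, him₁⟩, hiS⟩, rfl⟩
      · rintro (⟨i, hi, ⟨σ, hc, hti⟩, rfl⟩ | ⟨i, hi, rfl⟩)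
        · obtain ⟨σ', hc', ht'⟩ := constructionII Sm t hmono S m₁ m hm₁lt hcov σ hc i hti htmS
          exact ⟨i, ht'.1, ⟨σ', hc', ht'⟩, rfl⟩
        · have hiS : i ∈ S := (Finset.mem_inter.1 hi).2
          have him : i ∈ Sm m := (Finset.mem_sdiff.1 (Finset.mem_inter.1 hi).1).1
          have him₁ : i ∉ Sm m₁ := (Finset.mem_sdiff.1 (Finset.mem_inter.1 hi).1).2
          have hlow : ∀ m' : Fin M, i ∈ Sm m' → Sm m ⊆ Sm m' := by
            intro m' hm'
            apply hmono
            by_contra h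
            exact him₁ (hcov m' (lt_of_not_ge h) hm')
          obtain ⟨σ', hc', ht'⟩ := constructionI Sm t σ₀ hσ₀ S m i hiS him hlow htmS
          exact ⟨i, ht'.1, ⟨σ', hc', ht'⟩, rfl⟩
    have key : ∀ (X Y : Set ℝ), X.Finite → X.Nonempty → Y.Finite →
        sInf (X ∪ Y) = sInf (insert (sInf X) Y) := by
      intro X Y hXf hXn hYf
      rcases Y.eq_empty_or_nonempty with rfl | hYne
      · simp
      · rw [csInf_union hXf.bddBelow hXn hYf.bddBelow hYne,
          csInf_insert hYf.bddBelow hYne]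
    unfold rho
    rw [hTeq]
    exact key _ _ hXfin hXne (Set.Finite.image r ((Sm m \ Sm m₁) ∩ S).finite_toSet)

end RobustAssortment
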